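/- The map φ ↦ i_A ∘ φ, where i_A : R → A is the structure map, is an R-algebra homomorphism from the Hecke algebra H_R(G,H) into the skew Hecke algebra H_R(G,H,A,α), and it is injective whenever A is faithful as an R-module. -/
import Mathlib


open scoped BigOperators

def SkewHecke.IsInv {R A G : Type*} [CommRing R] [Ring A] [Algebra R A] [Group G]
    (H : Subgroup G) (α : G →* (A ≃ₐ[R] A)) (φ : G ⧸ H → A) : Prop :=
  ∀ h ∈ H, ∀ g : G, φ (QuotientGroup.mk (h * g)) = α h (φ (QuotientGroup.mk g))

def SkewHecke.IsSection {G : Type*} [Group G] {H : Subgroup G} (s : G ⧸ H → G) : Prop :=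
  ∀ c : G ⧸ H, QuotientGroup.mk (s c) = c

noncomputable def SkewHecke.conv {R A G : Type*} [CommRing R] [Ring A] [Algebra R A] [Group G]
    (H : Subgroup G) [Fintype (G ⧸ H)] (α : G →* (A ≃ₐ[R] A))
    (s : G ⧸ H → G) (φ ψ : G ⧸ H → A) : G ⧸ H → A :=
  fun x => ∑ c : G ⧸ H, φ c * α (s c) (ψ ((s c)⁻¹ • x))

noncomputable def SkewHecke.delta {A G : Type*} [Ring A] [Group G] (H : Subgroup G)
    (a : A) : G ⧸ H → A := by
  classical exact fun x => if x = QuotientGroup.mk (1 : G) then a else 0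

/-- The map `φ ↦ i_A ∘ φ` is an `R`-algebra homomorphism from the Hecke algebra
`H_R(G,H) = Maps(G/H,R)^H` (with the untwisted convolution product, i.e. the trivial action
`1 : G →* (R ≃ₐ[R] R)`) into the skew Hecke algebra `H_R(G,H,A,α)`, injective whenever `A`
is faithful as an `R`-module. -/
theorem hecke_to_skewHecke_embedding {R A G : Type*} [CommRing R] [Ring A]
    [Algebra R A] [Group G] (H : Subgroup G) [Fintype (G ⧸ H)]
    (α : G →* (A ≃ₐ[R] A)) (s : G ⧸ H → G) (hs : SkewHecke.IsSection s) :
    let J : (G ⧸ H → R) → (G ⧸ H → A) := fun φ x => algebraMap R A (φ x)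
    -- `J` maps the Hecke algebra into the skew Hecke algebra
    (∀ φ : G ⧸ H → R, SkewHecke.IsInv H (1 : G →* (R ≃ₐ[R] R)) φ →
      SkewHecke.IsInv H α (J φ)) ∧
    -- `J` is `R`-linear
    (∀ φ ψ : G ⧸ H → R, J (φ + ψ) = J φ + J ψ) ∧
    (∀ (r : R) (φ : G ⧸ H → R), J (r • φ) = r • J φ) ∧
    -- `J` is multiplicative and unital
    (∀ φ ψ : G ⧸ H → R, SkewHecke.IsInv H (1 : G →* (R ≃ₐ[R] R)) φ →
      SkewHecke.IsInv H (1 : G →* (R ≃ₐ[R] R)) ψ →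
      J (SkewHecke.conv H (1 : G →* (R ≃ₐ[R] R)) s φ ψ) =
        SkewHecke.conv H α s (J φ) (J ψ)) ∧
    J (SkewHecke.delta H (1 : R)) = SkewHecke.delta H (1 : A) ∧
    -- `J` is injective whenever `A` is a faithful `R`-module
    ((∀ r : R, (∀ a : A, r • a = 0) → r = 0) → Function.Injective J) := by
  intro J
  refine ⟨?_, ?_, ?_, ?_, ?_, ?_⟩
  · intro φ hφ h hh g
    have := hφ h hh g
    simp only [MonoidHom.one_apply, AlgEquiv.one_apply] at this
    simp only [J, this, AlgEquiv.commutes]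
  · intro φ ψ; funext x; simp [J, map_add]
  · intro r φ; funext x; simp [J, Algebra.smul_def]
  · intro φ ψ _ _
    funext x
    simp only [J, SkewHecke.conv, map_sum, map_mul, MonoidHom.one_apply,
      AlgEquiv.one_apply, AlgEquiv.commutes]
  · funext x
    simp only [J, SkewHecke.delta]
    split <;> simp
  · intro hf φ ψ h
    funext x
    have hx : algebraMap R A (φ x) = algebraMap R A (ψ x) := congrFun h x
    have : φ x - ψ x = 0 := by
      apply hf
      intro a
      rw [sub_smul, Algebra.smul_def, Algebra.smul_def, hx, sub_self]
    exact sub_eq_zero.mp this
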